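/- Let (c_n)_{n≥0} be an orthonormal basis of L²(ℝ), let ρ_f : ℝ → ℂ be measurable and nonzero a.e., set ρ_g = 1/conj(ρ_f), f_n = c_n·ρ_f, g_n = c_n·ρ_g, and V = {v ∈ L² : v·ρ_f ∈ L², v·ρ_g ∈ L²}. Let (α_n) be strictly increasing with α_0 = 0, ᾱ = sup_n α_n, and for |z| < ᾱ define N(|z|) = (Σ_{k≥0} |z|^{2k}/(α_k!)²)^{−1/2} and the linear functional F(z) on V by F(z)[v] = N(|z|)·Σ_{n≥0} (conj(z)ⁿ/α_n!)·⟨f_n, v⟩, and similarly G(z)[v] = N(|z|)·Σ_{n≥0} (conj(z)ⁿ/α_n!)·⟨g_n, v⟩. Then F(z) and G(z) are continuous with respect to the topology τ_V: whenever (v_k) ⊂ V and v ∈ V satisfy ‖v_k − v‖ → 0, ‖ρ_f·(v_k − v)‖ → 0 and ‖ρ_g·(v_k − v)‖ → 0, one has F(z)[v_k] → F(z)[v] and G(z)[v_k] → G(z)[v]. -/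

import Mathlib

set_option maxHeartbeats 1000000


open MeasureTheory Filter
open scoped ENNReal

noncomputable section

/-- The generalized factorial: `α_0! = 1`, `α_k! = α_1 ⋯ α_k`. -/
def alphaFact (α : ℕ → ℝ) : ℕ → ℝ
  | 0 => 1
  | n + 1 => alphaFact α n * α (n + 1)

/-- The weak bi-coherent state functional
`F(z)[v] = N(|z|) Σ_n (conj(z)ⁿ/α_n!) ⟨f_n, v⟩`, where
`N(|z|) = (Σ_k |z|^{2k}/(α_k!)²)^{-1/2}`. -/
def wbcs (α : ℕ → ℝ) (f : ℕ → ℝ → ℂ) (z : ℂ) (v : ℝ → ℂ) : ℂ :=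
  (((∑' j : ℕ, ‖z‖ ^ (2 * j) / alphaFact α j ^ 2) ^
      (-(1 : ℝ) / 2) : ℝ) : ℂ) *
    ∑' n : ℕ, ((starRingEnd ℂ) z) ^ n / (alphaFact α n : ℂ) *
      ∫ x : ℝ, (starRingEnd ℂ) (f n x) * v x

lemma alphaFact_pos {α : ℕ → ℝ} (hα : StrictMono α) (hα0 : α 0 = 0) :
    ∀ n, 0 < alphaFact α n
  | 0 => one_pos
  | n + 1 => by
    have h1 : 0 < α (n + 1) := by
      have := hα (Nat.succ_pos n); rwa [hα0] at this
    exact mul_pos (alphaFact_pos hα hα0 n) h1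

lemma summable_pow_div_alphaFact {α : ℕ → ℝ} (hα : StrictMono α) (hα0 : α 0 = 0)
    {r : ℝ} (hr : 0 ≤ r) {αbar : ℝ≥0∞} (hαbar : αbar = ⨆ n, ENNReal.ofReal (α n))
    (hz : ENNReal.ofReal r < αbar) :
    Summable fun n => r ^ n / alphaFact α n := by
  rw [hαbar, lt_iSup_iff] at hz
  obtain ⟨N, hN⟩ := hz
  have hαN : 0 < α N := by
    by_contra h
    push_neg at h
    rw [ENNReal.ofReal_eq_zero.mpr h] at hN
    exact (not_lt_of_ge (by positivity)) hN
  have hrN : r < α N := by rwa [ENNReal.ofReal_lt_ofReal_iff hαN] at hN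
  have hpos := alphaFact_pos hα hα0
  refine summable_of_ratio_norm_eventually_le (r := r / α N)
    ((div_lt_one hαN).mpr hrN) ?_
  filter_upwards [eventually_ge_atTop N] with n hn
  have hn1 : α N ≤ α (n + 1) := hα.monotone (le_trans hn (Nat.le_succ n))
  have hB : 0 < α (n + 1) := lt_of_lt_of_le hαN hn1
  rw [Real.norm_of_nonneg (div_nonneg (pow_nonneg hr _) (hpos _).le),
    Real.norm_of_nonneg (div_nonneg (pow_nonneg hr _) (hpos _).le)]
  have heq : r ^ (n + 1) / alphaFact α (n + 1)
      = (r ^ n / alphaFact α n) * (r / α (n + 1)) := by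
    rw [pow_succ, show alphaFact α (n + 1) = alphaFact α n * α (n + 1) from rfl,
      mul_div_mul_comm]
  rw [heq, mul_comm (r / α N)]
  refine mul_le_mul_of_nonneg_left ?_ (div_nonneg (pow_nonneg hr _) (hpos _).le)
  exact div_le_div_of_nonneg_left hr hαN hn1

lemma eLpNorm_toReal_eq_one {φ : ℝ → ℂ} (hφ : MemLp φ 2 (volume : Measure ℝ))
    (h : (∫ x : ℝ, (starRingEnd ℂ) (φ x) * φ x) = 1) :
    (eLpNorm φ 2 (volume : Measure ℝ)).toReal = 1 := by
  have h1 : (inner ℂ (hφ.toLp φ) (hφ.toLp φ) : ℂ) = 1 := by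
    rw [MeasureTheory.L2.inner_def, ← h]
    refine integral_congr_ae ?_
    filter_upwards [hφ.coeFn_toLp] with x hx
    rw [RCLike.inner_apply, hx, mul_comm]
  have h2 : ‖hφ.toLp φ‖ ^ 2 = 1 := by
    rw [@norm_sq_eq_re_inner ℂ, h1]
    simp
  have h3 : ‖hφ.toLp φ‖ = 1 := by nlinarith [norm_nonneg (hφ.toLp φ)]
  rw [← Lp.norm_toLp φ hφ]
  exact h3

lemma wbcs_key
    (c : ℕ → ℝ → ℂ) (hc2 : ∀ n, MemLp (c n) 2 (volume : Measure ℝ))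
    (hcn : ∀ n, (eLpNorm (c n) 2 (volume : Measure ℝ)).toReal ≤ 1)
    (ρ : ℝ → ℂ) (hρ : Measurable ρ)
    (F : ℕ → ℝ → ℂ) (hF : ∀ n x, F n x = c n x * ρ x)
    (α : ℕ → ℝ) (hpos : ∀ n, 0 < alphaFact α n)
    (z : ℂ) (hsum : Summable fun n => ‖z‖ ^ n / alphaFact α n)
    (v : ℝ → ℂ) (V : ℕ → ℝ → ℂ)
    (hv : MemLp v 2 (volume : Measure ℝ)) (hV : ∀ j, MemLp (V j) 2 (volume : Measure ℝ))
    (hvρ : MemLp (fun x => v x * ρ x) 2 (volume : Measure ℝ))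
    (hVρ : ∀ j, MemLp (fun x => V j x * ρ x) 2 (volume : Measure ℝ))
    (hconv : Tendsto (fun j => eLpNorm (fun x => ρ x * (V j x - v x)) 2
      (volume : Measure ℝ)) atTop (nhds 0)) :
    Tendsto (fun j => wbcs α F z (V j)) atTop (nhds (wbcs α F z v)) := by
  classical
  -- measurability of conj ρ
  have hstar : Measurable fun x => (starRingEnd ℂ) (ρ x) :=
    Complex.continuous_conj.measurable.comp hρ
  -- MemLp of conj ρ * u
  have hψmem : ∀ (u : ℝ → ℂ), MemLp u 2 (volume : Measure ℝ) →
      MemLp (fun x => u x * ρ x) 2 (volume : Measure ℝ) →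
      MemLp (fun x => (starRingEnd ℂ) (ρ x) * u x) 2 (volume : Measure ℝ) := by
    intro u hu huρ
    have hmeas : AEStronglyMeasurable (fun x => (starRingEnd ℂ) (ρ x) * u x)
        (volume : Measure ℝ) :=
      (hstar.aemeasurable.mul hu.aestronglyMeasurable.aemeasurable).aestronglyMeasurable
    refine ⟨hmeas, ?_⟩
    have heq : eLpNorm (fun x => (starRingEnd ℂ) (ρ x) * u x) 2 (volume : Measure ℝ)
        = eLpNorm (fun x => u x * ρ x) 2 (volume : Measure ℝ) :=
      eLpNorm_congr_norm_ae (Eventually.of_forall fun x => by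
        simp [map_mul, mul_comm])
    rw [heq]; exact huρ.2
  -- the inner product representation
  have hinner : ∀ (n : ℕ) (u : ℝ → ℂ)
      (hu : MemLp (fun x => (starRingEnd ℂ) (ρ x) * u x) 2 (volume : Measure ℝ)),
      (∫ x : ℝ, (starRingEnd ℂ) (F n x) * u x)
        = (inner ℂ ((hc2 n).toLp (c n)) (hu.toLp _) : ℂ) := by
    intro n u hu
    rw [MeasureTheory.L2.inner_def]
    refine integral_congr_ae ?_
    filter_upwards [(hc2 n).coeFn_toLp, hu.coeFn_toLp] with x h1 h2
    rw [RCLike.inner_apply, h1, h2, hF, map_mul]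
    ring
  -- Cauchy-Schwarz bound
  have hIbound : ∀ (n : ℕ) (u : ℝ → ℂ)
      (hu : MemLp (fun x => (starRingEnd ℂ) (ρ x) * u x) 2 (volume : Measure ℝ)),
      ‖∫ x : ℝ, (starRingEnd ℂ) (F n x) * u x‖ ≤
        (eLpNorm (fun x => (starRingEnd ℂ) (ρ x) * u x) 2 (volume : Measure ℝ)).toReal := by
    intro n u hu
    rw [hinner n u hu]
    calc ‖(inner ℂ ((hc2 n).toLp (c n)) (hu.toLp _) : ℂ)‖
        ≤ ‖(hc2 n).toLp (c n)‖ * ‖hu.toLp _‖ := norm_inner_le_norm _ _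
      _ ≤ 1 * ‖hu.toLp _‖ := by
          refine mul_le_mul_of_nonneg_right ?_ (norm_nonneg _)
          rw [Lp.norm_toLp]; exact hcn n
      _ = _ := by rw [one_mul, Lp.norm_toLp]
  -- coefficient norm
  have hacoef : ∀ n : ℕ, ‖((starRingEnd ℂ) z) ^ n / (alphaFact α n : ℂ)‖
      = ‖z‖ ^ n / alphaFact α n := by
    intro n
    rw [norm_div, norm_pow, RCLike.norm_conj,
      Complex.norm_real, Real.norm_of_nonneg (hpos n).le]
  -- summability of the defining series
  have hsummand : ∀ (u : ℝ → ℂ)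
      (hu : MemLp (fun x => (starRingEnd ℂ) (ρ x) * u x) 2 (volume : Measure ℝ)),
      Summable fun n => ((starRingEnd ℂ) z) ^ n / (alphaFact α n : ℂ) *
        ∫ x : ℝ, (starRingEnd ℂ) (F n x) * u x := by
    intro u hu
    apply Summable.of_norm
    refine Summable.of_nonneg_of_le (fun n => norm_nonneg _) (fun n => ?_)
      (hsum.mul_right ((eLpNorm (fun x => (starRingEnd ℂ) (ρ x) * u x) 2
        (volume : Measure ℝ)).toReal))
    rw [norm_mul, hacoef]
    exact mul_le_mul_of_nonneg_left (hIbound n u hu)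
      (div_nonneg (pow_nonneg (norm_nonneg z) n) (hpos n).le)
  -- MemLp facts
  have hψv : MemLp (fun x => (starRingEnd ℂ) (ρ x) * v x) 2 (volume : Measure ℝ) :=
    hψmem v hv hvρ
  have hψV : ∀ j, MemLp (fun x => (starRingEnd ℂ) (ρ x) * V j x) 2 (volume : Measure ℝ) :=
    fun j => hψmem _ (hV j) (hVρ j)
  have hd : ∀ j, MemLp (fun x => V j x - v x) 2 (volume : Measure ℝ) :=
    fun j => (hV j).sub hv
  have hdρ : ∀ j, MemLp (fun x => (V j x - v x) * ρ x) 2 (volume : Measure ℝ) := by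
    intro j
    have h1 := (hVρ j).sub hvρ
    have h2 : ((fun x => V j x * ρ x) - fun x => v x * ρ x)
        = fun x => (V j x - v x) * ρ x := by
      funext x; simp [sub_mul]
    rwa [h2] at h1
  have hψd : ∀ j, MemLp (fun x => (starRingEnd ℂ) (ρ x) * (V j x - v x)) 2
      (volume : Measure ℝ) := fun j => hψmem _ (hd j) (hdρ j)
  -- integrability
  have hint : ∀ (n : ℕ) (u : ℝ → ℂ)
      (hu : MemLp (fun x => (starRingEnd ℂ) (ρ x) * u x) 2 (volume : Measure ℝ)),
      Integrable (fun x => (starRingEnd ℂ) (F n x) * u x) (volume : Measure ℝ) := by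
    intro n u hu
    have h1 := MeasureTheory.L2.integrable_inner (𝕜 := ℂ) ((hc2 n).toLp (c n)) (hu.toLp _)
    refine h1.congr ?_
    filter_upwards [(hc2 n).coeFn_toLp, hu.coeFn_toLp] with x h1 h2
    rw [RCLike.inner_apply, h1, h2, hF, map_mul]
    ring
  have hintdiff : ∀ (n j : ℕ),
      (∫ x : ℝ, (starRingEnd ℂ) (F n x) * V j x)
        - (∫ x : ℝ, (starRingEnd ℂ) (F n x) * v x)
      = ∫ x : ℝ, (starRingEnd ℂ) (F n x) * (V j x - v x) := by
    intro n j
    rw [← integral_sub (hint n _ (hψV j)) (hint n v hψv)]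
    congr 1; funext x; ring
  -- the error sequence
  have heq : ∀ j, (eLpNorm (fun x => (starRingEnd ℂ) (ρ x) * (V j x - v x)) 2
      (volume : Measure ℝ)) = eLpNorm (fun x => ρ x * (V j x - v x)) 2
      (volume : Measure ℝ) := fun j =>
    eLpNorm_congr_norm_ae (Eventually.of_forall fun x => by
      simp [map_mul])
  have he0 : Tendsto (fun j => (eLpNorm (fun x => (starRingEnd ℂ) (ρ x) * (V j x - v x)) 2
      (volume : Measure ℝ)).toReal) atTop (nhds 0) := by
    simp only [heq]
    have := (ENNReal.tendsto_toReal (a := (0 : ℝ≥0∞)) (by simp)).comp hconv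
    simpa [Function.comp_def] using this
  -- main convergence of the tsum
  have main : Tendsto (fun j => ∑' n, ((starRingEnd ℂ) z) ^ n / (alphaFact α n : ℂ) *
        ∫ x : ℝ, (starRingEnd ℂ) (F n x) * V j x) atTop
      (nhds (∑' n, ((starRingEnd ℂ) z) ^ n / (alphaFact α n : ℂ) *
        ∫ x : ℝ, (starRingEnd ℂ) (F n x) * v x)) := by
    rw [← tendsto_sub_nhds_zero_iff, tendsto_zero_iff_norm_tendsto_zero]
    have hb : ∀ j, ‖(∑' n, ((starRingEnd ℂ) z) ^ n / (alphaFact α n : ℂ) *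
          ∫ x : ℝ, (starRingEnd ℂ) (F n x) * V j x)
        - ∑' n, ((starRingEnd ℂ) z) ^ n / (alphaFact α n : ℂ) *
          ∫ x : ℝ, (starRingEnd ℂ) (F n x) * v x‖
        ≤ (∑' n, ‖z‖ ^ n / alphaFact α n) *
          (eLpNorm (fun x => (starRingEnd ℂ) (ρ x) * (V j x - v x)) 2
            (volume : Measure ℝ)).toReal := by
      intro j
      set ej : ℝ := (eLpNorm (fun x => (starRingEnd ℂ) (ρ x) * (V j x - v x)) 2
        (volume : Measure ℝ)).toReal
      rw [← Summable.tsum_sub (hsummand _ (hψV j)) (hsummand _ hψv)]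
      have hre : (fun n => ((starRingEnd ℂ) z) ^ n / (alphaFact α n : ℂ) *
            (∫ x : ℝ, (starRingEnd ℂ) (F n x) * V j x)
          - ((starRingEnd ℂ) z) ^ n / (alphaFact α n : ℂ) *
            ∫ x : ℝ, (starRingEnd ℂ) (F n x) * v x)
          = fun n => ((starRingEnd ℂ) z) ^ n / (alphaFact α n : ℂ) *
            ∫ x : ℝ, (starRingEnd ℂ) (F n x) * (V j x - v x) := by
        funext n
        rw [← mul_sub, hintdiff n j]
      rw [hre]
      have hbn : ∀ n : ℕ, ‖((starRingEnd ℂ) z) ^ n / (alphaFact α n : ℂ) *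
          ∫ x : ℝ, (starRingEnd ℂ) (F n x) * (V j x - v x)‖
          ≤ (‖z‖ ^ n / alphaFact α n) * ej := by
        intro n
        rw [norm_mul, hacoef]
        exact mul_le_mul_of_nonneg_left (hIbound n _ (hψd j))
          (div_nonneg (pow_nonneg (norm_nonneg z) n) (hpos n).le)
      have hsn : Summable fun n => ‖((starRingEnd ℂ) z) ^ n / (alphaFact α n : ℂ) *
          ∫ x : ℝ, (starRingEnd ℂ) (F n x) * (V j x - v x)‖ :=
        Summable.of_nonneg_of_le (fun n => norm_nonneg _) hbn (hsum.mul_right ej)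
      calc ‖∑' n, ((starRingEnd ℂ) z) ^ n / (alphaFact α n : ℂ) *
            ∫ x : ℝ, (starRingEnd ℂ) (F n x) * (V j x - v x)‖
          ≤ ∑' n, ‖((starRingEnd ℂ) z) ^ n / (alphaFact α n : ℂ) *
            ∫ x : ℝ, (starRingEnd ℂ) (F n x) * (V j x - v x)‖ :=
            norm_tsum_le_tsum_norm hsn
        _ ≤ ∑' n, (‖z‖ ^ n / alphaFact α n) * ej :=
            Summable.tsum_le_tsum hbn hsn (hsum.mul_right ej)
        _ = (∑' n, ‖z‖ ^ n / alphaFact α n) * ej := by rw [tsum_mul_right]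
    refine squeeze_zero (fun j => norm_nonneg _) hb ?_
    have := he0.const_mul (∑' n, ‖z‖ ^ n / alphaFact α n)
    simpa using this
  simp only [wbcs]
  exact main.const_mul _

theorem stmt18
    -- an orthonormal basis (c_n) of L²(ℝ):
    (c : ℕ → ℝ → ℂ)
    (hc2 : ∀ n, MemLp (c n) 2 (volume : Measure ℝ))
    (horth : ∀ n m : ℕ,
      (∫ x : ℝ, (starRingEnd ℂ) (c n x) * c m x) = if n = m then 1 else 0)
    (hcomplete : ∀ h : ℝ → ℂ, MemLp h 2 (volume : Measure ℝ) →
      (∀ n : ℕ, (∫ x : ℝ, (starRingEnd ℂ) (c n x) * h x) = 0) →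
      h =ᵐ[volume] 0)
    -- the weights ρ_f and ρ_g = 1/conj(ρ_f):
    (ρf ρg : ℝ → ℂ) (hρf : Measurable ρf)
    (hρf0 : ∀ᵐ x : ℝ ∂volume, ρf x ≠ 0)
    (hρg : ∀ x, ρg x = ((starRingEnd ℂ) (ρf x))⁻¹)
    -- the deformed families f_n = c_n ρ_f and g_n = c_n ρ_g:
    (f g : ℕ → ℝ → ℂ)
    (hf : ∀ n x, f n x = c n x * ρf x)
    (hg : ∀ n x, g n x = c n x * ρg x)
    -- the sequence α:
    (α : ℕ → ℝ) (hα : StrictMono α) (hα0 : α 0 = 0)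
    (αbar : ℝ≥0∞) (hαbar : αbar = ⨆ n, ENNReal.ofReal (α n))
    -- z inside C_ᾱ(0):
    (z : ℂ) (hz : ENNReal.ofReal (‖z‖) < αbar)
    -- v and the sequence (v_j), all in V, with v_j → v in the topology τ_V:
    (v : ℝ → ℂ) (V : ℕ → ℝ → ℂ)
    (hv : MemLp v 2 (volume : Measure ℝ))
    (hvf : MemLp (fun x => v x * ρf x) 2 (volume : Measure ℝ))
    (hvg : MemLp (fun x => v x * ρg x) 2 (volume : Measure ℝ))
    (hV : ∀ j, MemLp (V j) 2 (volume : Measure ℝ))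
    (hVf : ∀ j, MemLp (fun x => V j x * ρf x) 2 (volume : Measure ℝ))
    (hVg : ∀ j, MemLp (fun x => V j x * ρg x) 2 (volume : Measure ℝ))
    (hconv : Tendsto (fun j => eLpNorm (fun x => V j x - v x) 2
      (volume : Measure ℝ)) atTop (nhds 0))
    (hconvf : Tendsto (fun j => eLpNorm (fun x => ρf x * (V j x - v x)) 2
      (volume : Measure ℝ)) atTop (nhds 0))
    (hconvg : Tendsto (fun j => eLpNorm (fun x => ρg x * (V j x - v x)) 2
      (volume : Measure ℝ)) atTop (nhds 0)) :
    Tendsto (fun j => wbcs α f z (V j)) atTop (nhds (wbcs α f z v)) ∧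
    Tendsto (fun j => wbcs α g z (V j)) atTop (nhds (wbcs α g z v)) := by
  have hpos := alphaFact_pos hα hα0
  have hsum : Summable fun n => ‖z‖ ^ n / alphaFact α n :=
    summable_pow_div_alphaFact hα hα0 (norm_nonneg z) hαbar hz
  have hcn : ∀ n, (eLpNorm (c n) 2 (volume : Measure ℝ)).toReal ≤ 1 := by
    intro n
    have h1 := eLpNorm_toReal_eq_one (hc2 n) (by simpa using horth n n)
    rw [h1]
  have hρgm : Measurable ρg := by
    have h : ρg = fun x => ((starRingEnd ℂ) (ρf x))⁻¹ := funext hρg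
    rw [h]
    exact (Complex.continuous_conj.measurable.comp hρf).inv
  constructor
  · exact wbcs_key c hc2 hcn ρf hρf f hf α hpos z hsum v V hv hV hvf hVf hconvf
  · exact wbcs_key c hc2 hcn ρg hρgm g hg α hpos z hsum v V hv hV hvg hVg hconvg

end
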